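/- Satisfaction Approval Voting (SAV) satisfies strong support monotonicity without population increase: if a winning SAV committee contains G and a voter not approving any candidate of G adds all of G to her ballot, then some winning committee of the new election contains G, and the analogous statement holds for all winning committees. -/
import Mathlib

open Finset

variable {C : Type*} [Fintype C] [DecidableEq C]

/-- The SAV score of a committee `W`: the sum over voters of the fraction of
their approved candidates that are in `W`. -/
noncomputable def savScore {V : Type*} [Fintype V] (A : V → Finset C) (W : Finset C) : ℝ :=
  ∑ i, ((A i ∩ W).card : ℝ) / ((A i).card : ℝ)

/-- `W` is a winning committee of Satisfaction Approval Voting for `(A, k)`. -/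
def isSAVWinner {V : Type*} [Fintype V] (A : V → Finset C) (k : ℕ) (W : Finset C) : Prop :=
  W.card = k ∧ ∀ W' : Finset C, W'.card = k → savScore A W' ≤ savScore A W

/-- The SAV "weight" of a single candidate. -/
noncomputable def savWgt {V : Type*} [Fintype V] (A : V → Finset C) (x : C) : ℝ :=
  ∑ j, if x ∈ A j then ((A j).card : ℝ)⁻¹ else 0

set_option linter.unusedSectionVars false in
/-- SAV scores are additive over candidates. -/
lemma savScore_eq_sum_wgt {V : Type*} [Fintype V] (A : V → Finset C) (W : Finset C) :
    savScore A W = ∑ x ∈ W, savWgt A x := by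
  unfold savScore savWgt
  rw [Finset.sum_comm]
  apply Finset.sum_congr rfl
  intro j _
  have h1 : A j ∩ W = W.filter (· ∈ A j) := by
    ext x; simp [and_comm]
  rw [h1, Finset.card_filter]
  push_cast
  rw [Finset.sum_div]
  apply Finset.sum_congr rfl
  intro x _
  split <;> simp [div_eq_mul_inv]

set_option linter.unusedSectionVars false in
/-- Swapping `c` in for `d` changes the SAV score by `savWgt c - savWgt d`. -/
lemma savScore_swap {V : Type*} [Fintype V] (A : V → Finset C) {W : Finset C} {c d : C}
    (hc : c ∉ W) (hd : d ∈ W) :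
    savScore A (insert c (W.erase d)) = savScore A W - savWgt A d + savWgt A c := by
  rw [savScore_eq_sum_wgt, savScore_eq_sum_wgt,
    Finset.sum_insert (fun h => hc (Finset.mem_of_mem_erase h))]
  have := Finset.sum_erase_add W (savWgt A) hd
  linarith

/-- SAV satisfies strong support monotonicity without population increase. -/
theorem sav_strong_SMWOPI {V : Type*} [Fintype V] [DecidableEq V]
    (A : V → Finset C) (hA : ∀ i, (A i).Nonempty)
    (k : ℕ) (hk : 1 ≤ k) (hkC : k ≤ Fintype.card C)
    (G : Finset C) (hG : G.Nonempty) (hGk : G.card ≤ k)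
    (i : V) (hiG : A i ∩ G = ∅)
    (W : Finset C) (hW : isSAVWinner A k W) (hGW : G ⊆ W) :
    (∃ W' : Finset C, isSAVWinner (Function.update A i (A i ∪ G)) k W' ∧ G ⊆ W') ∧
    ((∀ W₀ : Finset C, isSAVWinner A k W₀ → G ⊆ W₀) →
      ∀ W' : Finset C, isSAVWinner (Function.update A i (A i ∪ G)) k W' → G ⊆ W') := by
  classical
  set A' := Function.update A i (A i ∪ G) with hA'def
  have hdisj : Disjoint (A i) G := Finset.disjoint_iff_inter_eq_empty.mpr hiG
  have hA'i : A' i = A i ∪ G := Function.update_self i (A i ∪ G) A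
  have ha : 0 < ((A i).card : ℝ) := by
    exact_mod_cast Finset.card_pos.mpr (hA i)
  have hcard' : ((A' i).card : ℝ) = (A i).card + G.card := by
    rw [hA'i, Finset.card_union_of_disjoint hdisj]; push_cast; ring
  have hcard'pos : 0 < ((A' i).card : ℝ) := by
    have : (0:ℝ) < G.card := by exact_mod_cast Finset.card_pos.mpr hG
    linarith [hcard']
  -- difference of weights only involves voter i
  have hdiff : ∀ x : C, savWgt A' x - savWgt A x =
      (if x ∈ A' i then ((A' i).card : ℝ)⁻¹ else 0) -
      (if x ∈ A i then ((A i).card : ℝ)⁻¹ else 0) := by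
    intro x
    unfold savWgt
    rw [← Finset.sum_sub_distrib]
    apply Finset.sum_eq_single_of_mem i (Finset.mem_univ i)
    intro j _ hj
    rw [hA'def, Function.update_of_ne hj, sub_self]
  -- weights of G-candidates strictly increase
  have hG_up : ∀ c ∈ G, savWgt A c < savWgt A' c := by
    intro c hcG
    have hcAi : c ∉ A i := fun h => (Finset.disjoint_left.mp hdisj h) hcG
    have hcA'i : c ∈ A' i := by rw [hA'i]; exact Finset.mem_union_right _ hcG
    have := hdiff c
    rw [if_pos hcA'i, if_neg hcAi] at this
    have hpos : 0 < ((A' i).card : ℝ)⁻¹ := inv_pos.mpr hcard'pos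
    linarith
  -- weights of non-G candidates weakly decrease
  have hO_dn : ∀ d : C, d ∉ G → savWgt A' d ≤ savWgt A d := by
    intro d hdG
    have hmem : d ∈ A' i ↔ d ∈ A i := by
      rw [hA'i, Finset.mem_union]
      exact ⟨fun h => h.resolve_right hdG, Or.inl⟩
    have := hdiff d
    by_cases hdAi : d ∈ A i
    · rw [if_pos (hmem.mpr hdAi), if_pos hdAi] at this
      have hle : ((A' i).card : ℝ)⁻¹ ≤ ((A i).card : ℝ)⁻¹ := by
        apply inv_anti₀ ha
        have : (0:ℝ) ≤ G.card := by positivity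
        linarith [hcard']
      linarith
    · rw [if_neg (fun h => hdAi (hmem.mp h)), if_neg hdAi] at this
      linarith
  -- key: every SAV winner of A' contains G
  have key : ∀ W' : Finset C, isSAVWinner A' k W' → G ⊆ W' := by
    intro W' hW'
    by_contra hsub
    obtain ⟨c, hcG, hcW'⟩ := Finset.not_subset.mp hsub
    have hWW' : ¬ W' ⊆ W := by
      intro h
      have : W' = W := Finset.eq_of_subset_of_card_le h (by rw [hW'.1, hW.1])
      exact hcW' (this ▸ hGW hcG)
    obtain ⟨d, hdW', hdW⟩ := Finset.not_subset.mp hWW'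
    have hdG : d ∉ G := fun h => hdW (hGW h)
    -- from W being an A-winner: savWgt A d ≤ savWgt A c
    have hcW : c ∈ W := hGW hcG
    have h1 : savWgt A d ≤ savWgt A c := by
      have hcd : savScore A (insert d (W.erase c)) ≤ savScore A W := by
        apply hW.2
        rw [Finset.card_insert_of_notMem (fun h => hdW (Finset.mem_of_mem_erase h)),
          Finset.card_erase_of_mem hcW, hW.1]
        omega
      rw [savScore_swap A hdW hcW] at hcd
      linarith
    -- strict improvement for W'
    have h2 : savWgt A' d < savWgt A' c := by
      have := hO_dn d hdG
      have := hG_up c hcG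
      linarith
    have hswap : savScore A' (insert c (W'.erase d)) ≤ savScore A' W' := by
      apply hW'.2
      rw [Finset.card_insert_of_notMem (fun h => hcW' (Finset.mem_of_mem_erase h)),
        Finset.card_erase_of_mem hdW', hW'.1]
      omega
    rw [savScore_swap A' hcW' hdW'] at hswap
    linarith
  constructor
  · obtain ⟨W', hW'mem, hW'max⟩ := Finset.exists_max_image
      (Finset.powersetCard k (Finset.univ : Finset C)) (savScore A')
      ((Finset.powersetCard_nonempty).mpr (by simpa using hkC))
    have hW'card : W'.card = k := (Finset.mem_powersetCard.mp hW'mem).2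
    have hwin : isSAVWinner A' k W' := by
      refine ⟨hW'card, fun W'' h'' => hW'max W'' ?_⟩
      exact Finset.mem_powersetCard.mpr ⟨Finset.subset_univ _, h''⟩
    exact ⟨W', hwin, key W' hwin⟩
  · intro _ W' h
    exact key W' h
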